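/- For positive integers n, m with n ≥ 2, the number of lattice points (x_1,...,x_n) ∈ Z^n with x_1 = −ℓ (for fixed 1 ≤ ℓ ≤ n), x_i > −ℓ for 2 ≤ i ≤ j, x_i ≥ 0 for j+1 ≤ i ≤ n, and weight k/m with respect to the Kloosterman polytope Δ(K^j_{n,m}), equals C(k − mℓ + n − j − 1, n − 2) (taken to be 0 when the upper argument is negative). -/

import Mathlib

open Pointwise

/-- Integer binomial coefficient, zero for negative upper argument. -/
def ch (a : ℤ) (b : ℕ) : ℤ := if a < 0 then 0 else ((a.toNat).choose b : ℤ)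

/-- The weight of a lattice point with respect to a polytope given as the convex
hull of a vertex set `V`: the least `c ≥ 0` with `x ∈ c·Δ`. -/
noncomputable def polyWeight {n : ℕ} (V : Set (Fin n → ℝ)) (x : Fin n → ℤ) : ℝ :=
  sInf {c : ℝ | 0 ≤ c ∧ (fun i => (x i : ℝ)) ∈ c • convexHull ℝ V}

/-- The vertices of the Kloosterman polytope `Δ(K^j_{n,m})`:
`−(e₁+⋯+e_j)` and `m·e_i` for `1 ≤ i ≤ n`. -/
def klVerts (n j m : ℕ) : Set (Fin n → ℝ) :=
  insert (fun i : Fin n => if (i : ℕ) < j then (-1 : ℝ) else 0)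
    (Set.range fun ℓ : Fin n => fun i => if i = ℓ then (m : ℝ) else 0)


lemma card_sum_multisets {α : Type*} [DecidableEq α] (s : Finset α) (f : α → Multiset α) :
    Multiset.card (∑ i ∈ s, f i) = ∑ i ∈ s, Multiset.card (f i) := by
  induction s using Finset.induction with
  | empty => simp
  | insert a s h ih => simp [Finset.sum_insert h, ih]

lemma count_repl {D : Type*} [Fintype D] [DecidableEq D] (c : D → ℕ) (t : D) :
    Multiset.count t (∑ i, Multiset.replicate (c i) i) = c t := by
  rw [Multiset.count_sum']
  simp [Multiset.count_replicate]

noncomputable def symEquiv (D : Type*) [Fintype D] [DecidableEq D] (S : ℕ) :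
    {y : D → ℕ // ∑ i, y i = S} ≃ Sym D S where
  toFun y := ⟨∑ i, Multiset.replicate (y.1 i) i, by
    rw [card_sum_multisets]; simpa using y.2⟩
  invFun s := ⟨fun i => s.1.count i, by
    rw [← Finset.sum_subset (Finset.subset_univ s.1.toFinset)
      (by intro a _ ha; simpa [Multiset.count_eq_zero] using ha),
      Multiset.toFinset_sum_count_eq, s.2]⟩
  left_inv y := Subtype.ext (funext fun i => count_repl _ _)
  right_inv s := Subtype.ext (by
    refine Multiset.ext.2 fun t => ?_
    simp only [count_repl])

lemma ncard_sum_fin (D S : ℕ) :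
    Set.ncard {y : Fin (D + 1) → ℕ | ∑ i, y i = S} = (S + D).choose D := by
  have h1 : Set.ncard {y : Fin (D + 1) → ℕ | ∑ i, y i = S}
      = Nat.card (Sym (Fin (D + 1)) S) := Nat.card_congr ((Equiv.setCongr rfl).trans (symEquiv (Fin (D + 1)) S))
  rw [h1, Nat.card_eq_fintype_card, Sym.card_sym_fin_eq_multichoose, Nat.multichoose_eq]
  clear h1
  have : D + 1 + S - 1 = S + D := by omega
  rw [this, Nat.choose_symm_add]

lemma sum_ind {M : Type*} [AddCommMonoid M] (n j : ℕ) (c : M) :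
    ∑ i : Fin n, (if (i : ℕ) < j then c else 0) = min j n • c := by
  rw [Fin.sum_univ_eq_sum_range (fun t => if t < j then c else 0) n, ← Finset.sum_filter]
  have : (Finset.range n).filter (· < j) = Finset.range (min j n) := by
    ext t; simp only [Finset.mem_filter, Finset.mem_range]; omega
  rw [this, Finset.sum_const, Finset.card_range]

lemma sum_lb (n j ℓ : ℕ) (hn : 2 ≤ n) (hj : 1 ≤ j) (hjn : j ≤ n) (x : Fin n → ℤ)
    (h0 : x ⟨0, by omega⟩ = -(ℓ : ℤ))
    (h1 : ∀ i : Fin n, 1 ≤ (i : ℕ) → (i : ℕ) < j → -(ℓ : ℤ) < x i)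
    (h2 : ∀ i : Fin n, j ≤ (i : ℕ) → 0 ≤ x i) :
    (j : ℤ) * (1 - (ℓ : ℤ)) - 1 ≤ ∑ i, x i := by
  have key : ∀ i : Fin n,
      (if (i : ℕ) < j then 1 - (ℓ : ℤ) else 0) + (if i = (⟨0, by omega⟩ : Fin n) then (-1 : ℤ) else 0) ≤ x i := by
    intro i
    by_cases hi0 : i = (⟨0, by omega⟩ : Fin n)
    · subst hi0
      rw [if_pos (show ((⟨0, by omega⟩ : Fin n) : ℕ) < j by show 0 < j; omega), if_pos rfl, h0]
      omega
    · rw [if_neg hi0]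
      have hi0' : 1 ≤ (i : ℕ) := by
        rcases Nat.eq_zero_or_pos (i : ℕ) with h | h
        · exact absurd (Fin.ext h) hi0
        · exact h
      by_cases hij : (i : ℕ) < j
      · rw [if_pos hij]; have := h1 i hi0' hij; omega
      · rw [if_neg hij]; simpa using h2 i (by omega)
  calc (j : ℤ) * (1 - (ℓ : ℤ)) - 1
      = ∑ i : Fin n, ((if (i : ℕ) < j then 1 - (ℓ : ℤ) else 0)
          + (if i = (⟨0, by omega⟩ : Fin n) then (-1 : ℤ) else 0)) := by
        rw [Finset.sum_add_distrib, sum_ind n j (1 - (ℓ : ℤ)),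
          Finset.sum_ite_eq' Finset.univ (⟨0, by omega⟩ : Fin n) (fun _ => (-1 : ℤ))]
        rw [if_pos (Finset.mem_univ _), min_eq_left hjn, nsmul_eq_mul]
        ring
    _ ≤ ∑ i, x i := Finset.sum_le_sum fun i _ => key i

lemma klWeight (n m j ℓ : ℕ) (hn : 2 ≤ n) (hm : 0 < m) (hj : 1 ≤ j) (hjn : j ≤ n)
    (hℓ1 : 1 ≤ ℓ) (x : Fin n → ℤ)
    (hLB : (j : ℤ) * (1 - (ℓ : ℤ)) - 1 ≤ ∑ i, x i)
    (h0 : x ⟨0, by omega⟩ = -(ℓ : ℤ))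
    (h1 : ∀ i : Fin n, 1 ≤ (i : ℕ) → (i : ℕ) < j → -(ℓ : ℤ) < x i)
    (h2 : ∀ i : Fin n, j ≤ (i : ℕ) → 0 ≤ x i) :
    polyWeight (klVerts n j m) x = ((∑ i, (x i : ℝ)) + ((m : ℝ) + j) * ℓ) / m := by
  have hm' : (0 : ℝ) < m := by exact_mod_cast hm
  set i0 : Fin n := ⟨0, by omega⟩ with hi0def
  set X : Fin n → ℝ := fun i => (x i : ℝ) with hX
  have hXsum : ∑ i, X i = ((∑ i, x i : ℤ) : ℝ) := by push_cast [hX]; rfl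
  set c₀ : ℝ := ((∑ i, X i) + ((m : ℝ) + j) * ℓ) / m with hc₀
  have hnumZ : (1 : ℤ) ≤ (∑ i, x i) + ((m : ℤ) + j) * ℓ := by
    have hm1 : (1 : ℤ) ≤ m := by exact_mod_cast hm
    have hℓ1' : (1 : ℤ) ≤ ℓ := by exact_mod_cast hℓ1
    have hj1 : (1 : ℤ) ≤ j := by exact_mod_cast hj
    nlinarith [hLB]
  have hnum : (0 : ℝ) < (∑ i, X i) + ((m : ℝ) + j) * ℓ := by
    rw [hXsum]
    have : (0 : ℤ) < (∑ i, x i) + ((m : ℤ) + j) * ℓ := by omega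
    exact_mod_cast by push_cast; exact_mod_cast this
  have hc₀pos : 0 < c₀ := div_pos hnum hm'
  -- the linear functional
  set F : (Fin n → ℝ) → ℝ := fun y => ((∑ i, y i) - ((m : ℝ) + j) * y i0) / m with hF
  have hf : IsLinearMap ℝ F := by
    constructor
    · intro p q
      simp only [hF, Pi.add_apply]
      rw [Finset.sum_add_distrib]; ring
    · intro c p
      simp only [hF, Pi.smul_apply, smul_eq_mul]
      rw [← Finset.mul_sum]; ring
  have hhull : convexHull ℝ (klVerts n j m) ⊆ {y | F y ≤ 1} := by
    apply convexHull_min _ (convex_halfSpace_le hf 1)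
    rintro v (rfl | ⟨t, rfl⟩)
    · show F _ ≤ 1
      simp only [hF]
      rw [sum_ind n j (-1 : ℝ), min_eq_left hjn]
      have : (if ((i0 : Fin n) : ℕ) < j then (-1 : ℝ) else 0) = -1 := if_pos (by show 0 < j; omega)
      rw [this, nsmul_eq_mul, div_le_one hm']
      ring_nf
      nlinarith [hm']
    · show F _ ≤ 1
      simp only [hF]
      rw [Finset.sum_ite_eq' Finset.univ t (fun _ => (m : ℝ)), if_pos (Finset.mem_univ t),
        div_le_one hm']
      by_cases ht : i0 = t
      · rw [if_pos ht]
        have hj0 : (0 : ℝ) ≤ (j : ℝ) := by positivity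
        nlinarith [hm', hj0]
      · rw [if_neg ht]; ring_nf; exact le_refl _
  -- the convex combination
  set V0 : Fin n → ℝ := fun i => if (i : ℕ) < j then (-1 : ℝ) else 0 with hV0
  set E : Fin n → (Fin n → ℝ) := fun t i => if i = t then (m : ℝ) else 0 with hE
  set b : Fin n → ℝ := fun i => ((x i : ℝ) + (if (i : ℕ) < j then (ℓ : ℝ) else 0)) / m with hb
  have hbnn : ∀ i, 0 ≤ b i := by
    intro i
    apply div_nonneg _ hm'.le
    by_cases hij : (i : ℕ) < j
    · rw [if_pos hij]
      rcases Nat.eq_zero_or_pos (i : ℕ) with h | h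
      · have : i = i0 := Fin.ext h
        rw [this, h0]; push_cast; norm_num
      · have hxi := h1 i h hij
        have hxi' : (1 : ℤ) - ℓ ≤ x i := by omega
        have : (1 : ℝ) - ℓ ≤ (x i : ℝ) := by exact_mod_cast hxi'
        linarith
    · rw [if_neg hij]
      have := h2 i (by omega)
      simpa using (by exact_mod_cast this : (0:ℝ) ≤ (x i : ℝ))
  set w : Fin (n + 1) → ℝ := Fin.cons (ℓ : ℝ) b with hw
  set z : Fin (n + 1) → (Fin n → ℝ) := Fin.cons (α := fun _ => Fin n → ℝ) V0 E with hz
  have hwnn : ∀ idx, 0 ≤ w idx := by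
    intro idx
    induction idx using Fin.cases with
    | zero => simp [hw]
    | succ t => simpa [hw] using hbnn t
  have hzmem : ∀ idx, z idx ∈ klVerts n j m := by
    intro idx
    induction idx using Fin.cases with
    | zero => simp only [hz, Fin.cons_zero]; exact Set.mem_insert _ _
    | succ t => simp only [hz, Fin.cons_succ]; exact Set.mem_insert_of_mem _ ⟨t, rfl⟩
  have hbsum : ∑ i, b i = ((∑ i, X i) + (j : ℝ) * ℓ) / m := by
    rw [hb, ← Finset.sum_div]
    congr 1
    rw [Finset.sum_add_distrib, sum_ind n j ((ℓ : ℝ)), min_eq_left hjn, nsmul_eq_mul]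
  have hwsum : ∑ idx, w idx = c₀ := by
    rw [hw, Fin.sum_cons, hbsum, hc₀]
    field_simp
    ring
  have hwz : ∑ idx, w idx • z idx = X := by
    rw [hw, hz]
    have : ∑ idx : Fin (n+1), (Fin.cons (α := fun _ => ℝ) (ℓ:ℝ) b idx) • (Fin.cons (α := fun _ => Fin n → ℝ) V0 E idx)
        = (ℓ:ℝ) • V0 + ∑ t : Fin n, b t • E t := by
      rw [← Fin.sum_cons ((ℓ:ℝ) • V0) (fun t => b t • E t)]
      apply Finset.sum_congr rfl
      intro idx _
      induction idx using Fin.cases with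
      | zero => simp
      | succ t => simp
    rw [this]
    funext i
    have hEsum : (∑ t : Fin n, b t • E t) i = b i * m := by
      rw [Finset.sum_apply]
      have : ∀ t : Fin n, (b t • E t) i = if i = t then b t * m else 0 := by
        intro t
        simp only [Pi.smul_apply, hE, smul_eq_mul, mul_ite, mul_zero]
      rw [Finset.sum_congr rfl fun t _ => this t, Finset.sum_ite_eq Finset.univ i (fun t => b t * m),
        if_pos (Finset.mem_univ i)]
    simp only [Pi.add_apply, Pi.smul_apply, smul_eq_mul]
    rw [hEsum, hb]
    simp only
    rw [div_mul_cancel₀ _ hm'.ne']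
    by_cases hij : (i : ℕ) < j
    · simp only [hV0, if_pos hij, hX]; ring
    · simp only [hV0, if_neg hij, hX]; ring
  have hmemb : X ∈ c₀ • convexHull ℝ (klVerts n j m) := by
    rw [Set.mem_smul_set_iff_inv_smul_mem₀ hc₀pos.ne']
    have hcc := Finset.centerMass_mem_convexHull (R := ℝ) Finset.univ
      (fun i _ => hwnn i) (by rw [hwsum]; exact hc₀pos) (fun i _ => hzmem i)
    rw [Finset.centerMass, hwsum, hwz] at hcc
    exact hcc
  have hub : ∀ c ∈ {c : ℝ | 0 ≤ c ∧ X ∈ c • convexHull ℝ (klVerts n j m)}, c₀ ≤ c := by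
    rintro c ⟨hc0, hcmem⟩
    obtain ⟨p, hp, hpc⟩ := Set.mem_smul_set.1 hcmem
    have hfp : F p ≤ 1 := hhull hp
    have hXi0 : X i0 = -(ℓ : ℝ) := by
      simp only [hX, h0]; push_cast; ring
    have hFX : F X = c₀ := by
      simp only [hF, hXi0, hc₀]; ring_nf
    have hsm : F X = c * F p := by
      rw [← hpc, hf.map_smul, smul_eq_mul]
    calc c₀ = c * F p := by rw [← hFX, hsm]
      _ ≤ c * 1 := mul_le_mul_of_nonneg_left hfp hc0
      _ = c := mul_one c
  show sInf {c : ℝ | 0 ≤ c ∧ X ∈ c • convexHull ℝ (klVerts n j m)} = c₀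
  apply le_antisymm
  · exact csInf_le ⟨0, fun c hc => hc.1⟩ ⟨hc₀pos.le, hmemb⟩
  · exact le_csInf ⟨c₀, hc₀pos.le, hmemb⟩ hub

theorem stmt19 (n m j ℓ k : ℕ) (hn : 2 ≤ n) (hm : 0 < m) (hj : 1 ≤ j)
    (hjn : j ≤ n) (hℓ1 : 1 ≤ ℓ) (hℓn : ℓ ≤ n) :
    (Set.ncard {x : Fin n → ℤ |
        x ⟨0, by omega⟩ = -(ℓ : ℤ) ∧
        (∀ i : Fin n, 1 ≤ (i : ℕ) → (i : ℕ) < j → -(ℓ : ℤ) < x i) ∧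
        (∀ i : Fin n, j ≤ (i : ℕ) → 0 ≤ x i) ∧
        polyWeight (klVerts n j m) x = (k : ℝ) / m} : ℤ) =
      ch ((k : ℤ) - m * ℓ + n - j - 1) (n - 2) := by
  obtain ⟨d, rfl⟩ : ∃ d, n = d + 2 := ⟨n - 2, by omega⟩
  have hm' : (0 : ℝ) < m := by exact_mod_cast hm
  have hzero : (⟨0, by omega⟩ : Fin (d + 2)) = 0 := by apply Fin.ext; simp
  set Mn : ℕ := m * ℓ with hMn
  have hMcast : ((Mn : ℕ) : ℤ) = (m : ℤ) * ℓ := by rw [hMn]; push_cast; ring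
  -- rewrite the weight condition as a linear equation
  have hset : {x : Fin (d + 2) → ℤ |
        x ⟨0, by omega⟩ = -(ℓ : ℤ) ∧
        (∀ i : Fin (d + 2), 1 ≤ (i : ℕ) → (i : ℕ) < j → -(ℓ : ℤ) < x i) ∧
        (∀ i : Fin (d + 2), j ≤ (i : ℕ) → 0 ≤ x i) ∧
        polyWeight (klVerts (d + 2) j m) x = (k : ℝ) / m}
      = {x : Fin (d + 2) → ℤ |
        x ⟨0, by omega⟩ = -(ℓ : ℤ) ∧
        (∀ i : Fin (d + 2), 1 ≤ (i : ℕ) → (i : ℕ) < j → -(ℓ : ℤ) < x i) ∧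
        (∀ i : Fin (d + 2), j ≤ (i : ℕ) → 0 ≤ x i) ∧
        ∑ i, x i = (k : ℤ) - ((m : ℤ) + j) * ℓ} := by
    ext x
    simp only [Set.mem_setOf_eq]
    refine ⟨fun ⟨ha, hb, hc, hw⟩ => ⟨ha, hb, hc, ?_⟩, fun ⟨ha, hb, hc, hs⟩ => ⟨ha, hb, hc, ?_⟩⟩
    · have hLB := sum_lb (d + 2) j ℓ (by omega) hj hjn x ha hb hc
      rw [klWeight (d + 2) m j ℓ (by omega) hm hj hjn hℓ1 x hLB ha hb hc] at hw
      rw [div_eq_div_iff hm'.ne' hm'.ne'] at hw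
      have hR : (∑ i, (x i : ℝ)) = (k : ℝ) - ((m : ℝ) + j) * ℓ := by
        nlinarith [hw, hm']
      have hcast : ((∑ i, x i : ℤ) : ℝ) = (((k : ℤ) - ((m : ℤ) + j) * ℓ : ℤ) : ℝ) := by
        push_cast
        push_cast at hR
        linarith [hR]
      exact_mod_cast hcast
    · have hLB := sum_lb (d + 2) j ℓ (by omega) hj hjn x ha hb hc
      rw [klWeight (d + 2) m j ℓ (by omega) hm hj hjn hℓ1 x hLB ha hb hc]
      have hR : (∑ i, (x i : ℝ)) = (k : ℝ) - ((m : ℝ) + j) * ℓ := by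
        have hZ : ((∑ i, x i : ℤ) : ℝ) = (((k : ℤ) - ((m : ℤ) + j) * ℓ : ℤ) : ℝ) := by
          exact_mod_cast congrArg (Int.cast : ℤ → ℝ) hs
        rw [show (∑ i, (x i : ℝ)) = ((∑ i, x i : ℤ) : ℝ) by push_cast; rfl]
        push_cast at hZ ⊢
        linarith [hZ]
      rw [hR]; ring
  rw [hset]
  by_cases hk : Mn + j ≤ k + 1
  · -- nonempty case
    set S : ℕ := k + 1 - (Mn + j) with hS
    set φ : (Fin (d + 2) → ℤ) → (Fin (d + 1) → ℕ) :=
      fun x i => (x i.succ + (if ((i.succ : Fin (d + 2)) : ℕ) < j then (ℓ : ℤ) - 1 else 0)).toNat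
      with hφ
    set A : Set (Fin (d + 2) → ℤ) := {x : Fin (d + 2) → ℤ |
        x ⟨0, by omega⟩ = -(ℓ : ℤ) ∧
        (∀ i : Fin (d + 2), 1 ≤ (i : ℕ) → (i : ℕ) < j → -(ℓ : ℤ) < x i) ∧
        (∀ i : Fin (d + 2), j ≤ (i : ℕ) → 0 ≤ x i) ∧
        ∑ i, x i = (k : ℤ) - ((m : ℤ) + j) * ℓ} with hA
    have hnn : ∀ x ∈ A, ∀ t : Fin (d + 1),
        0 ≤ x t.succ + (if ((t.succ : Fin (d + 2)) : ℕ) < j then (ℓ : ℤ) - 1 else 0) := by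
      rintro x ⟨-, hb, hc, -⟩ t
      by_cases hij : ((t.succ : Fin (d + 2)) : ℕ) < j
      · rw [if_pos hij]
        have := hb t.succ (by simp [Fin.val_succ]) hij
        omega
      · rw [if_neg hij]
        have := hc t.succ (by omega)
        omega
    have hinj : Set.InjOn φ A := by
      intro x1 hx1 x2 hx2 heq
      funext i
      induction i using Fin.cases with
      | zero =>
        have e1 := hx1.1
        have e2 := hx2.1
        rw [hzero] at e1 e2
        rw [e1, e2]
      | succ t =>
        have e1 := congrFun heq t
        simp only [hφ] at e1
        have n1 := hnn x1 hx1 t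
        have n2 := hnn x2 hx2 t
        by_cases hij : ((t.succ : Fin (d + 2)) : ℕ) < j
        · rw [if_pos hij] at e1 n1 n2; omega
        · rw [if_neg hij] at e1 n1 n2; omega
    have hitesum : ∑ i : Fin (d + 1),
        (if ((i.succ : Fin (d + 2)) : ℕ) < j then (ℓ : ℤ) - 1 else 0)
        = ((j : ℤ) - 1) * ((ℓ : ℤ) - 1) := by
      have hcongr : ∀ i : Fin (d + 1),
          (if ((i.succ : Fin (d + 2)) : ℕ) < j then (ℓ : ℤ) - 1 else 0)
          = (if (i : ℕ) < j - 1 then (ℓ : ℤ) - 1 else 0) := by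
        intro i
        by_cases h : ((i.succ : Fin (d + 2)) : ℕ) < j
        · rw [if_pos h, if_pos (by simp only [Fin.val_succ] at h; omega)]
        · rw [if_neg h, if_neg (by simp only [Fin.val_succ] at h; omega)]
      rw [Finset.sum_congr rfl fun i _ => hcongr i, sum_ind (d + 1) (j - 1) ((ℓ : ℤ) - 1),
        min_eq_left (by omega), nsmul_eq_mul]
      have hj1 : ((j - 1 : ℕ) : ℤ) = (j : ℤ) - 1 := by omega
      rw [hj1]
    have hSval : (S : ℤ) = (k : ℤ) - (m : ℤ) * ℓ - j + 1 := by
      rw [← hMcast]; omega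
    have himg : φ '' A = {y : Fin (d + 1) → ℕ | ∑ i, y i = S} := by
      ext y
      constructor
      · rintro ⟨x, hx, rfl⟩
        simp only [Set.mem_setOf_eq]
        have hcast2 : ((∑ i, φ x i : ℕ) : ℤ) = (S : ℤ) := by
          push_cast
          rw [show (∑ i : Fin (d+1), ((φ x i : ℕ) : ℤ)) =
              ∑ i : Fin (d+1), (x i.succ + (if ((i.succ : Fin (d + 2)) : ℕ) < j then (ℓ : ℤ) - 1 else 0))
            from Finset.sum_congr rfl fun i _ => Int.toNat_of_nonneg (hnn x hx i)]
          rw [Finset.sum_add_distrib, hitesum, hSval]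
          have hsum := hx.2.2.2
          have h0' := hx.1
          rw [hzero] at h0'
          have hpeel : ∑ i : Fin (d + 2), x i = x 0 + ∑ t : Fin (d + 1), x t.succ :=
            Fin.sum_univ_succ x
          rw [hpeel, h0'] at hsum
          have hrest : ∑ t : Fin (d + 1), x t.succ = (k : ℤ) - ((m : ℤ) + j) * ℓ + ℓ := by
            linarith [hsum]
          rw [hrest]; ring
        exact_mod_cast hcast2
      · intro hy
        simp only [Set.mem_setOf_eq] at hy
        refine ⟨Fin.cons (α := fun _ => ℤ) (-(ℓ : ℤ)) (fun t => (y t : ℤ) -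
          (if ((t.succ : Fin (d + 2)) : ℕ) < j then (ℓ : ℤ) - 1 else 0)), ?_, ?_⟩
        · refine ⟨by rw [hzero]; exact Fin.cons_zero _ _, ?_, ?_, ?_⟩
          · intro i hi1 hij
            induction i using Fin.cases with
            | zero => simp at hi1
            | succ t =>
              rw [Fin.cons_succ, if_pos hij]
              have : (0 : ℤ) ≤ y t := Int.natCast_nonneg _
              omega
          · intro i hij
            induction i using Fin.cases with
            | zero =>
              simp only [Fin.val_zero] at hij
              omega
            | succ t =>
              have hij' : ¬ ((t.succ : Fin (d + 2)) : ℕ) < j := by omega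
              rw [Fin.cons_succ, if_neg hij']
              have : (0 : ℤ) ≤ y t := Int.natCast_nonneg _
              omega
          · rw [Fin.sum_univ_succ, Fin.cons_zero]
            have hterm : ∑ t : Fin (d + 1), Fin.cons (α := fun _ => ℤ) (-(ℓ : ℤ)) (fun t => (y t : ℤ) -
                (if ((t.succ : Fin (d + 2)) : ℕ) < j then (ℓ : ℤ) - 1 else 0)) t.succ
                = ∑ t : Fin (d + 1), ((y t : ℤ) -
                (if ((t.succ : Fin (d + 2)) : ℕ) < j then (ℓ : ℤ) - 1 else 0)) :=
              Finset.sum_congr rfl fun t _ => by rw [Fin.cons_succ]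
            rw [hterm, Finset.sum_sub_distrib, hitesum]
            have hysum : ((∑ i, y i : ℕ) : ℤ) = (S : ℤ) := by exact_mod_cast hy
            push_cast at hysum
            rw [hysum, hSval]
            ring
        · funext t
          simp only [hφ, Fin.cons_succ]
          rw [sub_add_cancel]
          exact Int.toNat_natCast _
    have hcard : Set.ncard A = (S + d).choose d := by
      rw [← Set.ncard_image_of_injOn hinj, himg, ncard_sum_fin d S]
    rw [hcard]
    -- now the RHS
    unfold ch
    have hupper : (k : ℤ) - m * ℓ + ((d + 2 : ℕ) : ℤ) - j - 1 = (S : ℤ) + d := by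
      rw [hSval]; push_cast; ring
    rw [hupper]
    rw [if_neg (by omega : ¬ ((S : ℤ) + (d : ℤ) < 0))]
    have ht1 : (((S : ℤ) + d)).toNat = S + d := by omega
    rw [ht1]
    have ht2 : d + 2 - 2 = d := by omega
    rw [ht2]
  · -- empty case
    have hempty : {x : Fin (d + 2) → ℤ |
        x ⟨0, by omega⟩ = -(ℓ : ℤ) ∧
        (∀ i : Fin (d + 2), 1 ≤ (i : ℕ) → (i : ℕ) < j → -(ℓ : ℤ) < x i) ∧
        (∀ i : Fin (d + 2), j ≤ (i : ℕ) → 0 ≤ x i) ∧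
        ∑ i, x i = (k : ℤ) - ((m : ℤ) + j) * ℓ} = ∅ := by
      rw [Set.eq_empty_iff_forall_notMem]
      rintro x ⟨ha, hb, hc, hs⟩
      have hLB := sum_lb (d + 2) j ℓ (by omega) hj hjn x ha hb hc
      rw [hs] at hLB
      have hkZ : (k : ℤ) + 1 < (m : ℤ) * ℓ + j := by
        rw [← hMcast]; omega
      nlinarith [hLB, hkZ]
    rw [hempty, Set.ncard_empty]
    unfold ch
    have hkZ : (k : ℤ) + 1 < (m : ℤ) * ℓ + j := by rw [← hMcast]; omega
    split_ifs with h
    · rfl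
    · push_neg at h
      have hlt : ((k : ℤ) - m * ℓ + ((d + 2 : ℕ) : ℤ) - j - 1).toNat < d + 2 - 2 := by
        push_cast at h ⊢
        omega
      rw [Nat.choose_eq_zero_of_lt hlt]
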